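/- Let Z be a compact metrizable totally disconnected space with an action of a group Γ by homeomorphisms, and suppose the quotient C(Z,ℤ)_Γ of coinvariants, tensored with ℝ, is a one-dimensional real vector space. Then there is at most one Γ-invariant Borel probability measure on Z. -/
import Mathlib

open MeasureTheory
open scoped TensorProduct

def coinvariantsSubgroup (Γ Z : Type*) [Group Γ] [TopologicalSpace Z] [MulAction Γ Z]
    [ContinuousConstSMul Γ Z] : AddSubgroup C(Z, ℤ) :=
  AddSubgroup.closure
    {g | ∃ (f : C(Z, ℤ)) (γ : Γ),
      g = f - f.comp ⟨fun z => γ⁻¹ • z, continuous_const_smul γ⁻¹⟩}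

section aux

set_option linter.unusedSectionVars false
variable {Z : Type*} [MetricSpace Z] [CompactSpace Z] [MeasurableSpace Z] [BorelSpace Z]

lemma contReal (f : C(Z, ℤ)) : Continuous fun z => ((f z : ℝ)) :=
  continuous_of_discreteTopology.comp f.continuous

lemma integrableReal (f : C(Z, ℤ)) (μ : Measure Z) [IsFiniteMeasure μ] :
    Integrable (fun z => ((f z : ℝ))) μ :=
  (contReal f).integrable_of_hasCompactSupport (HasCompactSupport.of_compactSpace _)

/-- Integration as an additive hom `C(Z,ℤ) →+ ℝ`. -/
noncomputable def intHom (μ : Measure Z) [IsFiniteMeasure μ] : C(Z, ℤ) →+ ℝ :=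
  AddMonoidHom.mk' (fun f => ∫ z, ((f z : ℝ)) ∂μ) (by
    intro f g
    simp only [ContinuousMap.add_apply, Int.cast_add]
    exact integral_add (integrableReal f μ) (integrableReal g μ))

open scoped Classical in
/-- The indicator of a clopen set as a continuous integer-valued map. -/
noncomputable def clopenInd {A : Set Z} (hA : IsClopen A) : C(Z, ℤ) :=
  ⟨fun z => if z ∈ A then 1 else 0, by
    classical
    apply Continuous.if ?_ continuous_const continuous_const
    intro a ha
    rw [Set.setOf_mem_eq, hA.frontier_eq] at ha
    exact absurd ha (Set.notMem_empty a)⟩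

lemma intHom_clopenInd (μ : Measure Z) [IsFiniteMeasure μ] {A : Set Z} (hA : IsClopen A) :
    intHom μ (clopenInd hA) = (μ A).toReal := by
  classical
  have h1 : ∀ z : Z, (((clopenInd hA) z : ℝ)) = A.indicator (1 : Z → ℝ) z := by
    intro z
    simp [clopenInd, Set.indicator_apply]
  simp only [intHom, AddMonoidHom.mk'_apply]
  rw [show (fun z => (((clopenInd hA) z : ℤ) : ℝ)) = fun z => A.indicator (1 : Z → ℝ) z from
    funext h1]
  exact integral_indicator_one hA.2.measurableSet

end aux

/-- if the coinvariants `C(Z,ℤ)_Γ` tensored with `ℝ` form a one-dimensional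
real vector space, then there is at most one `Γ`-invariant Borel probability measure
on `Z`. -/
theorem stmt16 (Γ Z : Type*) [Group Γ] [MetricSpace Z] [CompactSpace Z]
    [TotallyDisconnectedSpace Z] [MeasurableSpace Z] [BorelSpace Z]
    [MulAction Γ Z] [ContinuousConstSMul Γ Z]
    (hrank : Module.finrank ℝ (ℝ ⊗[ℤ] (C(Z, ℤ) ⧸ coinvariantsSubgroup Γ Z)) = 1) :
    ∀ μ ν : Measure Z, IsProbabilityMeasure μ → IsProbabilityMeasure ν →
      (∀ (γ : Γ) (A : Set Z), MeasurableSet A → μ ((γ • ·) '' A) = μ A) →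
      (∀ (γ : Γ) (A : Set Z), MeasurableSet A → ν ((γ • ·) '' A) = ν A) →
      μ = ν := by
  intro μ ν hμp hνp hμi hνi
  set S := coinvariantsSubgroup Γ Z with hS
  -- the integration homs kill the coinvariants subgroup
  have key : ∀ (κ : Measure Z) (_ : IsProbabilityMeasure κ),
      (∀ (γ : Γ) (A : Set Z), MeasurableSet A → κ ((γ • ·) '' A) = κ A) →
      ∀ x ∈ S, intHom κ x = 0 := by
    intro κ hκp hκi
    have hmap : ∀ γ : Γ, Measure.map (fun z => γ • z) κ = κ := by
      intro γ
      have hc : Continuous fun z : Z => γ • z := continuous_const_smul γ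
      refine Measure.ext fun A hA => ?_
      rw [Measure.map_apply hc.measurable hA]
      have : (fun z : Z => γ • z) ⁻¹' A = (fun z : Z => γ⁻¹ • z) '' A := by
        ext z
        constructor
        · intro hz; exact ⟨γ • z, hz, by simp⟩
        · rintro ⟨w, hw, rfl⟩; simpa using hw
      rw [this, hκi γ⁻¹ A hA]
    have : S ≤ (intHom κ).ker := by
      refine (AddSubgroup.closure_le _).mpr ?_
      rintro g ⟨f, γ, rfl⟩
      have hcomp : ∫ z, ((f (γ⁻¹ • z) : ℝ)) ∂κ = ∫ z, ((f z : ℝ)) ∂κ := by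
        conv_rhs => rw [← hmap γ⁻¹]
        rw [integral_map (continuous_const_smul (γ⁻¹ : Γ)).measurable.aemeasurable
          ((contReal f).aestronglyMeasurable)]
      have : intHom κ (f - f.comp ⟨fun z => γ⁻¹ • z, continuous_const_smul γ⁻¹⟩) = 0 := by
        rw [map_sub]
        have h1 : intHom κ f = ∫ z, ((f z : ℝ)) ∂κ := rfl
        have h2 : intHom κ (f.comp ⟨fun z => γ⁻¹ • z, continuous_const_smul γ⁻¹⟩)
            = ∫ z, ((f (γ⁻¹ • z) : ℝ)) ∂κ := rfl
        rw [h1, h2, hcomp, sub_self]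
      exact this
    exact fun x hx => this hx
  -- induced functionals on the quotient and on the tensor product
  let ψμ : (C(Z, ℤ) ⧸ S) →+ ℝ := QuotientAddGroup.lift S (intHom μ) (key μ hμp hμi)
  let ψν : (C(Z, ℤ) ⧸ S) →+ ℝ := QuotientAddGroup.lift S (intHom ν) (key ν hνp hνi)
  let Lμ : (ℝ ⊗[ℤ] (C(Z, ℤ) ⧸ S)) →ₗ[ℝ] ℝ := ψμ.toIntLinearMap.liftBaseChange ℝ
  let Lν : (ℝ ⊗[ℤ] (C(Z, ℤ) ⧸ S)) →ₗ[ℝ] ℝ := ψν.toIntLinearMap.liftBaseChange ℝ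
  have hint1 : ∀ (κ : Measure Z) (_ : IsProbabilityMeasure κ),
      intHom κ (1 : C(Z, ℤ)) = 1 := by
    intro κ hκp
    simp [intHom]
  -- the class of the constant function 1
  let e : ℝ ⊗[ℤ] (C(Z, ℤ) ⧸ S) := (1 : ℝ) ⊗ₜ[ℤ] ((1 : C(Z, ℤ)) : C(Z, ℤ) ⧸ S)
  have hLμe : Lμ e = 1 := by
    simp only [Lμ, e, LinearMap.liftBaseChange_tmul, one_smul]
    exact hint1 μ hμp
  have hLνe : Lν e = 1 := by
    simp only [Lν, e, LinearMap.liftBaseChange_tmul, one_smul]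
    exact hint1 ν hνp
  have he : e ≠ 0 := by
    intro h
    rw [h, map_zero] at hLμe
    exact one_ne_zero hLμe.symm
  have hspan := (finrank_eq_one_iff_of_nonzero' e he).mp hrank
  -- all integrals agree
  have hints : ∀ f : C(Z, ℤ), intHom μ f = intHom ν f := by
    intro f
    obtain ⟨c, hc⟩ := hspan ((1 : ℝ) ⊗ₜ[ℤ] ((f : C(Z, ℤ) ⧸ S)))
    have hμ' : intHom μ f = Lμ ((1 : ℝ) ⊗ₜ[ℤ] ((f : C(Z, ℤ) ⧸ S))) := by
      simp only [Lμ, LinearMap.liftBaseChange_tmul, one_smul]; rfl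
    have hν' : intHom ν f = Lν ((1 : ℝ) ⊗ₜ[ℤ] ((f : C(Z, ℤ) ⧸ S))) := by
      simp only [Lν, LinearMap.liftBaseChange_tmul, one_smul]; rfl
    rw [hμ', hν', ← hc, _root_.map_smul, _root_.map_smul, hLμe, hLνe]
  -- agreement on clopen sets
  have hclopen : ∀ A : Set Z, IsClopen A → μ A = ν A := by
    intro A hA
    have := hints (clopenInd hA)
    rw [intHom_clopenInd μ hA, intHom_clopenInd ν hA] at this
    exact (ENNReal.toReal_eq_toReal_iff' (measure_ne_top μ A) (measure_ne_top ν A)).mp this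
  -- conclude via the π-system of clopen sets
  refine ext_of_generate_finite {s : Set Z | IsClopen s} ?_ ?_ ?_ ?_
  · rw [BorelSpace.measurable_eq (α := Z)]
    exact isTopologicalBasis_isClopen.borel_eq_generateFrom
  · exact fun s hs t ht _ => hs.inter ht
  · exact fun s hs => hclopen s hs
  · rw [hμp.measure_univ, hνp.measure_univ]
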